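/- Correctness of the Floyd–Warshall algorithm: Let n ≥ 1 and let M : Fin n → Fin n → ℝ be an arc-cost matrix on the complete directed graph with vertex set Fin n. Define the Floyd–Warshall matrices F : ℕ → Fin n → Fin n → ℝ by F 0 = M and, for j < n, F (j+1) i k = min (F j i k) (F j i v_j + F j v_j k), where v_j is the vertex of index j. Assume M contains no negative cycle, i.e., for every nonempty list of distinct vertices c_0, c_1, …, c_{m−1}, the cyclic cost ∑_{t=0}^{m−1} M c_t c_{(t+1) mod m} is nonnegative. Then for every j ≤ n and all vertices i, k with i ≠ k, F j i k equals the minimum, over all simple paths from i to k whose intermediate vertices all have index strictly less than j, of the total cost of the path (the cost of a path i = p_0, p_1, …, p_ℓ = k being ∑_{t=0}^{ℓ−1} M p_t p_{t+1}). -/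

import Mathlib

namespace FWaux

variable {n : ℕ} (M : Fin n → Fin n → ℝ)

def cost (w : List (Fin n)) : ℝ := (List.zipWith M w w.tail).sum

@[simp] lemma cost_nil : cost M [] = 0 := rfl
@[simp] lemma cost_single (a : Fin n) : cost M [a] = 0 := rfl
lemma cost_cons (a b : Fin n) (t : List (Fin n)) :
    cost M (a :: b :: t) = M a b + cost M (b :: t) := by
  simp [cost]

lemma cost_split (s t : List (Fin n)) (u : Fin n) :
    cost M (s ++ u :: t) = cost M (s ++ [u]) + cost M (u :: t) := by
  induction s with
  | nil => simp
  | cons a s ih =>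
    cases s with
    | nil => simp [cost_cons]
    | cons b s' =>
      simp only [List.cons_append, cost_cons] at *
      rw [ih]; ring

end FWaux
namespace FWaux
variable {n : ℕ} (M : Fin n → Fin n → ℝ)

lemma cost_cycle_eq (c : List (Fin n)) (hc : c ≠ []) :
    cost M (c ++ [c.head hc]) =
      ∑ t : Fin c.length,
        M (c.get t) (c.get ⟨((t : ℕ) + 1) % c.length, Nat.mod_lt _ t.pos⟩) := by
  obtain ⟨u, y, rfl⟩ := List.exists_cons_of_ne_nil hc
  have hlen1 : ((u :: y) ++ [u]).tail = (u :: y).rotate 1 := by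
    simp [List.rotate_cons_succ]
  have hkey : List.zipWith M ((u :: y) ++ [u]) (((u :: y) ++ [u]).tail) =
      List.ofFn (fun t : Fin (u :: y).length =>
        M ((u :: y).get t)
          ((u :: y).get ⟨((t : ℕ) + 1) % (u :: y).length, Nat.mod_lt _ t.pos⟩)) := by
    apply List.ext_getElem
    · simp [hlen1]
    · intro i h1 h2
      have hi : i < (u :: y).length := by simpa using h2
      rw [List.getElem_zipWith]
      rw [List.getElem_ofFn]
      have hiv : i < ((u :: y) ++ [u]).length := lt_of_lt_of_le hi (by simp)
      have e1 : ((u :: y) ++ [u])[i] = (u :: y)[i] := by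
        rw [List.getElem_append_left hi]
      have e2 : (((u :: y) ++ [u]).tail)[i]'(by simpa [hlen1] using hi) =
          ((u :: y).rotate 1)[i]'(by simpa using hi) := by
        congr 1 <;> simp [hlen1]
      rw [e1]
      have e3 := List.getElem_rotate (u :: y) 1 i (by simpa using hi)
      simp only [e2, e3]
      rfl
  have hh : (u :: y).head hc = u := rfl
  rw [hh]
  simp only [cost, hkey, List.sum_ofFn]
end FWaux
namespace FWaux

lemma not_nodup_decomp {α : Type*} : ∀ {l : List α}, ¬ l.Nodup →
    ∃ (x : List α) (d : α) (s z : List α), l = x ++ d :: (s ++ d :: z) := by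
  intro l
  induction l with
  | nil => intro h; exact absurd List.nodup_nil h
  | cons a t ih =>
    intro h
    by_cases ha : a ∈ t
    · obtain ⟨s, z, rfl⟩ := List.append_of_mem ha
      exact ⟨[], a, s, z, rfl⟩
    · have ht : ¬ t.Nodup := fun hh => h (List.nodup_cons.2 ⟨ha, hh⟩)
      obtain ⟨x, d, s, z, rfl⟩ := ih ht
      exact ⟨a :: x, d, s, z, rfl⟩

variable {n : ℕ} (M : Fin n → Fin n → ℝ)

lemma cost_closed_nonneg
    (hcyc : ∀ (c : List (Fin n)) (u : Fin n), c.head? = some u → c.Nodup →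
      0 ≤ cost M (c ++ [u])) :
    ∀ (N : ℕ) (w : List (Fin n)), w.length ≤ N → w.head? = w.getLast? →
      0 ≤ cost M w := by
  intro N
  induction N with
  | zero => intro w hw _; interval_cases h : w.length <;> simp_all [List.length_eq_zero_iff] <;> simp [h]
  | succ N ih =>
    intro w hw hclosed
    match w with
    | [] => simp
    | [a] => simp
    | u :: b :: t =>
      -- w = u :: y ++ [u]
      have hne : (b :: t) ≠ [] := by simp
      have hlast : (u :: b :: t).getLast? = some ((b :: t).getLast hne) := by
        rw [List.getLast?_eq_getLast (by simp), List.getLast_cons hne]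
      have hu : (b :: t).getLast hne = u := by
        have : some u = some ((b :: t).getLast hne) := by
          rw [← hlast, ← hclosed]; rfl
        exact (Option.some_inj.1 this).symm
      obtain ⟨y, hy⟩ : ∃ y, b :: t = y ++ [u] := by
        refine ⟨(b :: t).dropLast, ?_⟩
        conv_lhs => rw [← List.dropLast_append_getLast hne]
        rw [hu]
      rw [hy, ← List.cons_append]
      by_cases hnd : (u :: y).Nodup
      · exact hcyc (u :: y) u rfl hnd
      · obtain ⟨x, d, s, z, hdec⟩ := not_nodup_decomp hnd
        have hww : u :: y ++ [u] = x ++ d :: ((s ++ d :: z) ++ [u]) := by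
          rw [show u :: y ++ [u] = (u :: y) ++ [u] by simp, hdec]; simp
        have e1 : cost M (x ++ d :: ((s ++ d :: z) ++ [u])) =
            cost M (x ++ [d]) + cost M (d :: ((s ++ d :: z) ++ [u])) :=
          cost_split M x _ d
        have e2 : cost M (d :: ((s ++ d :: z) ++ [u])) =
            cost M ((d :: s) ++ [d]) + cost M (d :: (z ++ [u])) := by
          rw [show d :: ((s ++ d :: z) ++ [u]) = (d :: s) ++ d :: (z ++ [u]) by simp]
          exact cost_split M (d :: s) _ d
        have e3 : cost M (x ++ d :: (z ++ [u])) =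
            cost M (x ++ [d]) + cost M (d :: (z ++ [u])) := cost_split M x _ d
        have e4 : cost M (d :: (s ++ [d])) = cost M ((d :: s) ++ [d]) := by
          simp
        have hcost : cost M (u :: y ++ [u]) =
            cost M (x ++ d :: (z ++ [u])) + cost M (d :: (s ++ [d])) := by
          rw [hww, e1, e2, e3, e4]; ring
        have hlen : (u :: y).length = x.length + s.length + z.length + 2 := by
          rw [hdec]
          simp only [List.length_append, List.length_cons]
          omega
        have hlenw : (u :: y ++ [u]).length ≤ N + 1 := by simpa [hy] using hw
        -- inner closed walk
        have hinner : 0 ≤ cost M (d :: (s ++ [d])) := by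
          apply ih
          · simp only [List.length_cons, List.length_append, List.length_cons,
              List.length_nil] at *
            omega
          · rw [show d :: (s ++ [d]) = (d :: s) ++ [d] by simp, List.getLast?_concat]
            rfl
        -- outer closed walk
        have houter : 0 ≤ cost M (x ++ d :: (z ++ [u])) := by
          apply ih
          · simp only [List.length_append, List.length_cons, List.length_nil] at *
            omega
          · have hh : (x ++ d :: (z ++ [u])).getLast? = some u := by
              rw [show x ++ d :: (z ++ [u]) = (x ++ d :: z) ++ [u] by simp]
              exact List.getLast?_concat
            rw [hh]
            cases x with
            | nil =>
              have : u = d := by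
                have := hdec
                simp at this
                exact this.1
              simp [this]
            | cons a x' =>
              have : a = u := by
                have := congrArg List.head? hdec
                simpa using this.symm
              simp [this]
        linarith [hcost, hinner, houter]
end FWaux
namespace FWaux
variable {n : ℕ} (M : Fin n → Fin n → ℝ)

lemma exists_nodup_shortcut
    (hcl : ∀ w : List (Fin n), w.head? = w.getLast? → 0 ≤ cost M w) :
    ∀ (N : ℕ) (w : List (Fin n)), w.length ≤ N →
      ∃ w' : List (Fin n), w'.Nodup ∧ w'.head? = w.head? ∧
        w'.getLast? = w.getLast? ∧ (∀ v ∈ w', v ∈ w) ∧ cost M w' ≤ cost M w := by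
  intro N
  induction N with
  | zero =>
    intro w hw
    have : w = [] := List.length_eq_zero_iff.1 (Nat.le_zero.1 hw)
    exact ⟨[], by simp [this]⟩
  | succ N ih =>
    intro w hw
    by_cases hnd : w.Nodup
    · exact ⟨w, hnd, rfl, rfl, fun v hv => hv, le_refl _⟩
    · obtain ⟨x, d, s, z, rfl⟩ := not_nodup_decomp hnd
      have e1 : cost M (x ++ d :: (s ++ d :: z)) =
          cost M (x ++ [d]) + cost M (d :: (s ++ d :: z)) := cost_split M x _ d
      have e2 : cost M (d :: (s ++ d :: z)) =
          cost M ((d :: s) ++ [d]) + cost M (d :: z) := by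
        rw [show d :: (s ++ d :: z) = (d :: s) ++ d :: z by simp]
        exact cost_split M (d :: s) _ d
      have e3 : cost M (x ++ d :: z) =
          cost M (x ++ [d]) + cost M (d :: z) := cost_split M x _ d
      have hinner : 0 ≤ cost M ((d :: s) ++ [d]) := by
        apply hcl
        rw [List.getLast?_concat]; rfl
      have hle : cost M (x ++ d :: z) ≤ cost M (x ++ d :: (s ++ d :: z)) := by
        rw [e1, e2, e3]; linarith
      have hlen : (x ++ d :: z).length ≤ N := by
        have := hw
        simp only [List.length_append, List.length_cons] at *
        omega
      obtain ⟨w', h1, h2, h3, h4, h5⟩ := ih (x ++ d :: z) hlen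
      refine ⟨w', h1, ?_, ?_, ?_, le_trans h5 hle⟩
      · rw [h2]
        cases x with
        | nil => rfl
        | cons a x' => rw [List.head?_append_of_ne_nil _ (by simp),
            List.head?_append_of_ne_nil _ (by simp)]
      · rw [h3]
        cases z with
        | nil =>
          rw [show x ++ d :: (s ++ d :: ([] : List (Fin n))) = (x ++ d :: s) ++ [d] by simp,
            List.getLast?_concat, List.getLast?_concat]
        | cons b z' =>
          rw [List.getLast?_append_of_ne_nil _ (show d :: (s ++ d :: (b :: z')) ≠ [] by simp),
            List.getLast?_append_of_ne_nil _ (show d :: (b :: z') ≠ [] by simp)]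
          rw [List.getLast?_cons_cons]
          rw [show d :: (s ++ d :: (b :: z')) = (d :: (s ++ [d])) ++ (b :: z') by simp,
            List.getLast?_append_of_ne_nil _ (show (b :: z') ≠ [] by simp)]
      · intro v hv
        have := h4 v hv
        simp only [List.mem_append, List.mem_cons] at this ⊢
        tauto
end FWaux

open FWaux in
lemma fw_main {n : ℕ} (M : Fin n → Fin n → ℝ) (F : ℕ → Fin n → Fin n → ℝ)
    (hF0 : F 0 = M)
    (hFstep : ∀ (j : ℕ) (hj : j < n) (i k : Fin n),
      F (j + 1) i k = min (F j i k) (F j i ⟨j, hj⟩ + F j ⟨j, hj⟩ k))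
    (hcl : ∀ w : List (Fin n), w.head? = w.getLast? → 0 ≤ cost M w)
    (hsc : ∀ w : List (Fin n),
      ∃ w' : List (Fin n), w'.Nodup ∧ w'.head? = w.head? ∧
        w'.getLast? = w.getLast? ∧ (∀ v ∈ w', v ∈ w) ∧ cost M w' ≤ cost M w) :
    ∀ j, j ≤ n → (∀ i : Fin n, 0 ≤ F j i i) ∧
      ∀ i k : Fin n, i ≠ k → IsLeast
        { c : ℝ | ∃ q : List (Fin n),
            (i :: (q ++ [k])).Nodup ∧
            (∀ v ∈ q, (v : ℕ) < j) ∧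
            c = cost M (i :: (q ++ [k])) } (F j i k) := by
  intro j
  induction j with
  | zero =>
    intro _
    constructor
    · intro i
      rw [hF0]
      have := hcl [i, i] rfl
      simpa [cost] using this
    · intro i k hik
      rw [hF0]
      constructor
      · exact ⟨[], by simp [List.nodup_cons, hik], by simp, by simp [cost]⟩
      · rintro c ⟨q, hnd, hq, rfl⟩
        have hq0 : q = [] := by
          cases q with
          | nil => rfl
          | cons a t => exact absurd (hq a (by simp)) (by omega)
        simp [hq0, cost, le_refl]
  | succ j ih =>
    intro hjn
    have hj : j < n := hjn
    have ihj := ih (le_of_lt hj)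
    set v : Fin n := ⟨j, hj⟩ with hv
    -- a generally useful fact: x ≠ v ∧ x < j+1 → x < j
    have hltj : ∀ x : Fin n, (x : ℕ) < j + 1 → x ≠ v → (x : ℕ) < j := by
      intro x h1 h2
      have : (x : ℕ) ≠ j := fun hh => h2 (Fin.ext hh)
      omega
    -- splitting a walk through v
    have hsplit : ∀ (i k : Fin n) (q1 q2 : List (Fin n)),
        cost M (i :: ((q1 ++ v :: q2) ++ [k])) =
          cost M (i :: (q1 ++ [v])) + cost M (v :: (q2 ++ [k])) := by
      intro i k q1 q2
      rw [show i :: ((q1 ++ v :: q2) ++ [k]) = (i :: q1) ++ v :: (q2 ++ [k]) by simp,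
        cost_split M (i :: q1) (q2 ++ [k]) v,
        show (i :: q1) ++ [v] = i :: (q1 ++ [v]) by simp]
    -- membership of concatenated optimal subpaths, when v ∉ {i, k}
    have hconc : ∀ (i k : Fin n), i ≠ v → v ≠ k →
        ∃ w : List (Fin n), w.head? = some i ∧ w.getLast? = some k ∧
          (∀ x ∈ w, x = i ∨ x = k ∨ (x : ℕ) < j + 1) ∧
          cost M w = F j i v + F j v k := by
      intro i k hiv hvk
      obtain ⟨q1, hnd1, hq1, hc1⟩ := (ihj.2 i v hiv).1
      obtain ⟨q2, hnd2, hq2, hc2⟩ := (ihj.2 v k hvk).1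
      refine ⟨i :: ((q1 ++ v :: q2) ++ [k]), rfl, ?_, ?_, ?_⟩
      · rw [show i :: ((q1 ++ v :: q2) ++ [k]) = (i :: (q1 ++ v :: q2)) ++ [k] by simp,
          List.getLast?_concat]
      · intro x hx
        rcases List.mem_cons.1 hx with rfl | hx
        · exact Or.inl rfl
        rcases List.mem_append.1 hx with hx | hx
        · rcases List.mem_append.1 hx with hx | hx
          · exact Or.inr (Or.inr (Nat.lt_succ_of_lt (hq1 x hx)))
          · rcases List.mem_cons.1 hx with rfl | hx
            · exact Or.inr (Or.inr (Nat.lt_succ_self j))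
            · exact Or.inr (Or.inr (Nat.lt_succ_of_lt (hq2 x hx)))
        · have : x = k := by simpa using hx
          exact Or.inr (Or.inl this)
      · rw [hsplit, ← hc1, ← hc2]
    constructor
    · -- nonnegativity of diagonal entries
      intro i
      rw [hFstep j hj i i]
      rcases eq_or_ne v i with rfl | hvi
      · have h0 := ihj.1 v
        simp only [le_min_iff]
        exact ⟨h0, by linarith⟩
      · obtain ⟨w, hw1, hw2, _, hw4⟩ := hconc i i (Ne.symm hvi) hvi
        have : 0 ≤ cost M w := hcl w (by rw [hw1, hw2])
        have h0 := ihj.1 i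
        simp only [le_min_iff]
        exact ⟨h0, by linarith⟩
    · -- IsLeast
      intro i k hik
      rw [hFstep j hj i k]
      have hA : True := trivial
      -- lower bound
      have hlb : ∀ c ∈ { c : ℝ | ∃ q : List (Fin n),
          (i :: (q ++ [k])).Nodup ∧ (∀ x ∈ q, (x : ℕ) < j + 1) ∧
          c = cost M (i :: (q ++ [k])) }, min (F j i k) (F j i v + F j v k) ≤ c := by
        rintro c ⟨q, hnd, hq, rfl⟩
        by_cases hvq : v ∈ q
        · obtain ⟨q1, q2, rfl⟩ := List.append_of_mem hvq
          rw [hsplit]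
          have hndq' : ((q1 ++ v :: q2) ++ [k]).Nodup := (List.nodup_cons.1 hnd).2
          have hndq : (q1 ++ v :: q2).Nodup :=
            List.Nodup.sublist (List.sublist_append_left _ _) hndq'
          have hik' : i ∉ (q1 ++ v :: q2) ++ [k] := (List.nodup_cons.1 hnd).1
          -- i :: (q1 ++ [v]) is a simple path with intermediates < j
          have hmem1 : cost M (i :: (q1 ++ [v])) ∈ { c : ℝ | ∃ q : List (Fin n),
              (i :: (q ++ [v])).Nodup ∧ (∀ x ∈ q, (x : ℕ) < j) ∧
              c = cost M (i :: (q ++ [v])) } := by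
            refine ⟨q1, ?_, ?_, rfl⟩
            · refine List.Nodup.sublist ?_ hnd
              refine List.Sublist.cons₂ i ?_
              rw [show (q1 ++ v :: q2) ++ [k] = q1 ++ (v :: (q2 ++ [k])) by simp]
              exact List.Sublist.append_left
                (List.Sublist.cons₂ v (List.nil_sublist _)) q1
            · intro x hx
              refine hltj x (hq x (by simp [hx])) ?_
              intro hxv
              have hdisj := List.disjoint_of_nodup_append hndq
              exact hdisj hx (hxv ▸ (List.mem_cons_self : v ∈ v :: q2))
          have hmem2 : cost M (v :: (q2 ++ [k])) ∈ { c : ℝ | ∃ q : List (Fin n),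
              (v :: (q ++ [k])).Nodup ∧ (∀ x ∈ q, (x : ℕ) < j) ∧
              c = cost M (v :: (q ++ [k])) } := by
            refine ⟨q2, ?_, ?_, rfl⟩
            · refine List.Nodup.sublist ?_ hndq'
              rw [show (q1 ++ v :: q2) ++ [k] = q1 ++ (v :: (q2 ++ [k])) by simp]
              exact List.sublist_append_right _ _
            · intro x hx
              refine hltj x (hq x (by simp [hx])) ?_
              intro hxv
              have : (v :: q2).Nodup := (List.nodup_append.1 hndq).2.1
              exact (List.nodup_cons.1 this).1 (hxv ▸ hx)
          have hiv : i ≠ v := by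
            rintro rfl
            exact hik' (List.mem_append_left _ hvq)
          have hvk : v ≠ k := by
            have hdisj := List.disjoint_of_nodup_append hndq'
            intro hh
            exact hdisj hvq (by simp [hh])
          have h1 := (ihj.2 i v hiv).2 hmem1
          have h2 := (ihj.2 v k hvk).2 hmem2
          calc min (F j i k) (F j i v + F j v k) ≤ (F j i v + F j v k) := min_le_right _ _
            _ ≤ _ := add_le_add h1 h2
        · have hq' : ∀ x ∈ q, (x : ℕ) < j := fun x hx =>
            hltj x (hq x hx) (fun hh => hvq (hh ▸ hx))
          have := (ihj.2 i k hik).2 ⟨q, hnd, hq', rfl⟩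
          calc min (F j i k) (F j i v + F j v k) ≤ (F j i k) := min_le_left _ _
            _ ≤ _ := this
      refine ⟨?_, hlb⟩
      -- membership
      rcases le_or_gt (F j i k) (F j i v + F j v k) with hAB | hBA
      · rw [min_eq_left hAB]
        obtain ⟨q, hnd, hq, hc⟩ := (ihj.2 i k hik).1
        exact ⟨q, hnd, fun x hx => Nat.lt_succ_of_lt (hq x hx), hc⟩
      · rw [min_eq_right (le_of_lt hBA)]
        have hvi : v ≠ i := by
          rintro rfl
          have h0 := ihj.1 v
          linarith
        have hvk : v ≠ k := by
          rintro rfl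
          have h0 := ihj.1 v
          linarith
        obtain ⟨w, hw1, hw2, hw3, hw4⟩ := hconc i k (Ne.symm hvi) hvk
        obtain ⟨w', hn1, hn2, hn3, hn4, hn5⟩ := hsc w
        rw [hw1] at hn2
        rw [hw2] at hn3
        -- w' = i :: (q' ++ [k])
        obtain ⟨r, rfl⟩ : ∃ r, w' = i :: r := by
          cases w' with
          | nil => simp at hn2
          | cons a r => exact ⟨r, by simpa using congrArg (Option.getD · i) hn2⟩
        have hrne : r ≠ [] := by
          rintro rfl
          simp at hn3
          exact hik hn3
        obtain ⟨q', rfl⟩ : ∃ q', r = q' ++ [k] := by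
          refine ⟨r.dropLast, ?_⟩
          have h1 : (i :: r).getLast? = some (r.getLast hrne) := by
            rw [List.getLast?_eq_getLast (by simp), List.getLast_cons hrne]
          rw [h1] at hn3
          have h2 : r.getLast hrne = k := Option.some_inj.1 hn3
          conv_lhs => rw [← List.dropLast_append_getLast hrne]
          rw [h2]
        have hcmem : cost M (i :: (q' ++ [k])) ∈ { c : ℝ | ∃ q : List (Fin n),
            (i :: (q ++ [k])).Nodup ∧ (∀ x ∈ q, (x : ℕ) < j + 1) ∧
            c = cost M (i :: (q ++ [k])) } := by
          refine ⟨q', hn1, ?_, rfl⟩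
          intro x hx
          have hxw := hn4 x (by simp [hx])
          rcases hw3 x hxw with rfl | rfl | h
          · exact absurd (List.mem_append_left _ hx) (List.nodup_cons.1 hn1).1
          · have hdisj := List.disjoint_of_nodup_append (List.nodup_cons.1 hn1).2
            exact (hdisj hx (by simp)).elim
          · exact h
        have hge := hlb _ hcmem
        have hle : cost M (i :: (q' ++ [k])) ≤ (F j i v + F j v k) :=
          le_trans hn5 (le_of_eq hw4)
        have : cost M (i :: (q' ++ [k])) = (F j i v + F j v k) := le_antisymm hle (by
          have := min_le_right (F j i k) (F j i v + F j v k)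
          calc (F j i v + F j v k) = min (F j i k) (F j i v + F j v k) := (min_eq_right (le_of_lt hBA)).symm
            _ ≤ _ := hge)
        obtain ⟨q, h1, h2, h3⟩ := hcmem
        exact ⟨q, h1, h2, by rw [← this, h3]⟩


/-- **Theorem 3.2 (correctness of the Floyd–Warshall algorithm).**
Let `M` be an arc-cost matrix on the complete digraph with vertex set `Fin n`,
and let `F` be the Floyd–Warshall matrices: `F 0 = M` and, for `j < n`,
`F (j+1) i k = min (F j i k) (F j i vⱼ + F j vⱼ k)` where `vⱼ = ⟨j, _⟩`.
If `M` has no negative cycle (for every nonempty list of distinct vertices the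
cyclic cost is nonnegative), then for every `j ≤ n` and all `i ≠ k`, the entry
`F j i k` is the least cost of a simple path from `i` to `k` all of whose
intermediate vertices have index `< j`, the cost of a path being the sum of
`M` over consecutive pairs. -/
theorem floyd_warshall_correct (n : ℕ) (hn : 1 ≤ n)
    (M : Fin n → Fin n → ℝ) (F : ℕ → Fin n → Fin n → ℝ)
    (hF0 : F 0 = M)
    (hFstep : ∀ (j : ℕ) (hj : j < n) (i k : Fin n),
      F (j + 1) i k = min (F j i k) (F j i ⟨j, hj⟩ + F j ⟨j, hj⟩ k))
    (hNoNegCycle : ∀ c : List (Fin n), c ≠ [] → c.Nodup →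
      0 ≤ ∑ t : Fin c.length,
        M (c.get t) (c.get ⟨((t : ℕ) + 1) % c.length, Nat.mod_lt _ t.pos⟩))
    (j : ℕ) (hj : j ≤ n) (i k : Fin n) (hik : i ≠ k) :
    IsLeast
      { c : ℝ | ∃ q : List (Fin n),
          (i :: (q ++ [k])).Nodup ∧
          (∀ v ∈ q, (v : ℕ) < j) ∧
          c = (List.zipWith M (i :: (q ++ [k])) (q ++ [k])).sum }
      (F j i k) := by
  have hcyc : ∀ (c : List (Fin n)) (u : Fin n), c.head? = some u → c.Nodup →
      0 ≤ FWaux.cost M (c ++ [u]) := by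
    intro c u hu hnd
    have hc : c ≠ [] := by rintro rfl; simp at hu
    have hhead : c.head hc = u := by
      rwa [List.head?_eq_head hc, Option.some_inj] at hu
    have h := hNoNegCycle c hc hnd
    rw [← FWaux.cost_cycle_eq M c hc] at h
    rwa [hhead] at h
  have hcl' : ∀ w : List (Fin n), w.head? = w.getLast? → 0 ≤ FWaux.cost M w :=
    fun w h => FWaux.cost_closed_nonneg M hcyc w.length w le_rfl h
  have hsc : ∀ w : List (Fin n),
      ∃ w' : List (Fin n), w'.Nodup ∧ w'.head? = w.head? ∧
        w'.getLast? = w.getLast? ∧ (∀ v ∈ w', v ∈ w) ∧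
        FWaux.cost M w' ≤ FWaux.cost M w :=
    fun w => FWaux.exists_nodup_shortcut M hcl' w.length w le_rfl
  exact (fw_main M F hF0 hFstep hcl' hsc j hj).2 i k hik
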